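/- Define A : ℝ → Matrix (Fin 2) (Fin 2) ℝ by A(t) = (1/2) · [[sin 2t, -1 - cos 2t], [1 - cos 2t, -sin 2t]], and define Y : ℝ → Matrix (Fin 2) (Fin 2) ℝ by Y(t) = [[t·sin t + cos t, -sin t], [sin t - t·cos t, cos t]]. Then Y(0) = I, Y'(t) = A(t) · Y(t) for all real t, and Y(π) = [[-1, 0], [π, -1]]. -/

import Mathlib

attribute [local instance] Matrix.normedAddCommGroup Matrix.normedSpace

/-- The coefficient matrix of Example 2 (Moan's example). -/
noncomputable def Aex (t : ℝ) : Matrix (Fin 2) (Fin 2) ℝ :=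
  (1 / 2 : ℝ) •
    !![Real.sin (2 * t), -1 - Real.cos (2 * t);
       1 - Real.cos (2 * t), -Real.sin (2 * t)]

/-- The fundamental solution of Example 2. -/
noncomputable def Yex (t : ℝ) : Matrix (Fin 2) (Fin 2) ℝ :=
  !![t * Real.sin t + Real.cos t, -Real.sin t;
     Real.sin t - t * Real.cos t, Real.cos t]

lemma Aex_mul_Yex (t : ℝ) :
    Aex t * Yex t = !![t * Real.cos t, -Real.cos t; t * Real.sin t, -Real.sin t] := by
  have hs := Real.sin_sq_add_cos_sq t
  have h2s := Real.sin_two_mul t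
  have h2c := Real.cos_two_mul t
  ext i j
  fin_cases i <;> fin_cases j <;>
      simp [Aex, Yex, Matrix.mul_apply, Fin.sum_univ_two] <;>
    rw [h2s, h2c]
  · linear_combination (t * Real.cos t) * hs
  · linear_combination (-Real.cos t) * hs
  · linear_combination (-Real.cos t) * hs
  · ring

lemma Yex_hasDerivAt (t : ℝ) :
    HasDerivAt Yex (!![t * Real.cos t, -Real.cos t; t * Real.sin t, -Real.sin t]) t := by
  refine hasDerivAt_pi.2 ?_
  intro i
  rw [hasDerivAt_pi]
  intro j
  fin_cases i <;> fin_cases j <;> simp [Yex]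
  · -- d/dt (t sin t + cos t) = t cos t
    have h : HasDerivAt (fun t : ℝ => t * Real.sin t + Real.cos t)
        (1 * Real.sin t + t * Real.cos t + -Real.sin t) t :=
      ((hasDerivAt_id t).mul (Real.hasDerivAt_sin t)).add (Real.hasDerivAt_cos t)
    simpa using h.congr_deriv (by ring)
  · exact (Real.hasDerivAt_sin t).neg
  · have h : HasDerivAt (fun t : ℝ => Real.sin t - t * Real.cos t)
        (Real.cos t - (1 * Real.cos t + t * -Real.sin t)) t :=
      (Real.hasDerivAt_sin t).sub ((hasDerivAt_id t).mul (Real.hasDerivAt_cos t))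
    simpa using h.congr_deriv (by ring)
  · exact Real.hasDerivAt_cos t

/-- `Y` satisfies `Y(0) = I`, `Y'(t) = A(t) Y(t)` for all `t`, and
`Y(π) = [[-1, 0], [π, -1]]`. -/
theorem magnus_stmt10 :
    Yex 0 = 1 ∧
    (∀ t : ℝ, HasDerivAt Yex (Aex t * Yex t) t) ∧
    Yex Real.pi = !![(-1 : ℝ), 0; Real.pi, -1] := by
  refine ⟨?_, fun t => ?_, ?_⟩
  · ext i j; fin_cases i <;> fin_cases j <;> simp [Yex, Matrix.one_apply]
  · rw [Aex_mul_Yex]; exact Yex_hasDerivAt t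
  · ext i j; fin_cases i <;> fin_cases j <;> simp [Yex]
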